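/- Let p, ε be real numbers with 0 < p < 1 and 0 ≤ ε ≤ min(p, 1−p), let r and n be natural numbers with 2 ≤ r ≤ n, and define p⁺, p⁻ : Fin n → ℝ by p±(1) = p ± ε, p±(j) = (1 − p ∓ ε)/(r − 1) for 2 ≤ j ≤ r, and p±(j) = 0 for r < j ≤ n. Then p⁺ and p⁻ are probability distributions (nonnegative entries summing to 1), and their Hellinger distance satisfies d_H(p⁺, p⁻) = √(1 − √(p² − ε²) − √((1−p)² − ε²)). -/

import Mathlib

open Finset

lemma sum_aux (a b : ℝ) (r n : ℕ) (hr : 2 ≤ r) (hrn : r ≤ n) :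
    (∑ j : Fin n, (if (j : ℕ) = 0 then a else if (j : ℕ) < r then b else 0))
      = a + ((r : ℝ) - 1) * b := by
  rw [Fin.sum_univ_eq_sum_range (fun i => if i = 0 then a else if i < r then b else 0) n]
  rw [← Finset.sum_range_add_sum_Ico _ hrn]
  have h2 : ∑ i ∈ Finset.Ico r n, (if i = 0 then a else if i < r then b else 0) = 0 :=
    Finset.sum_eq_zero fun i hi => by
      simp only [Finset.mem_Ico] at hi
      rw [if_neg (by omega), if_neg (by omega)]
  rw [h2, add_zero, Finset.range_eq_Ico, Finset.sum_eq_sum_Ico_succ_bot (by omega)]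
  have h3 : ∑ i ∈ Finset.Ico 1 r, (if i = 0 then a else if i < r then b else 0)
      = ∑ _i ∈ Finset.Ico 1 r, b :=
    Finset.sum_congr rfl fun i hi => by
      simp only [Finset.mem_Ico] at hi
      rw [if_neg (by omega), if_pos (by omega)]
  rw [h3, Finset.sum_const, Nat.card_Ico, if_pos rfl, nsmul_eq_mul]
  have : ((r - 1 : ℕ) : ℝ) = (r : ℝ) - 1 := by
    push_cast [Nat.cast_sub (by omega : 1 ≤ r)]; ring
  rw [this]

theorem stmt8 (p ε : ℝ) (hp0 : 0 < p) (hp1 : p < 1) (hε0 : 0 ≤ ε)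
    (hε : ε ≤ min p (1 - p)) (r n : ℕ) (hr : 2 ≤ r) (hrn : r ≤ n)
    (pPlus pMinus : Fin n → ℝ)
    (hPlus : pPlus = fun (j : Fin n) =>
      if (j : ℕ) = 0 then p + ε
      else if (j : ℕ) < r then (1 - p - ε) / ((r : ℝ) - 1) else 0)
    (hMinus : pMinus = fun (j : Fin n) =>
      if (j : ℕ) = 0 then p - ε
      else if (j : ℕ) < r then (1 - p + ε) / ((r : ℝ) - 1) else 0) :
    (∀ j, 0 ≤ pPlus j) ∧ (∀ j, 0 ≤ pMinus j) ∧
    (∑ j, pPlus j) = 1 ∧ (∑ j, pMinus j) = 1 ∧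
    Real.sqrt (2⁻¹ * ∑ j, (Real.sqrt (pPlus j) - Real.sqrt (pMinus j)) ^ 2)
      = Real.sqrt (1 - Real.sqrt (p ^ 2 - ε ^ 2) - Real.sqrt ((1 - p) ^ 2 - ε ^ 2)) := by
  have hεp : ε ≤ p := le_trans hε (min_le_left _ _)
  have hε1p : ε ≤ 1 - p := le_trans hε (min_le_right _ _)
  have hc : (0:ℝ) < (r : ℝ) - 1 := by
    have : (2:ℝ) ≤ (r:ℝ) := by exact_mod_cast hr
    linarith
  subst hPlus hMinus
  have h1 : (0:ℝ) ≤ p + ε := by linarith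
  have h2 : (0:ℝ) ≤ p - ε := by linarith
  have h3 : (0:ℝ) ≤ 1 - p - ε := by linarith
  have h4 : (0:ℝ) ≤ 1 - p + ε := by linarith
  refine ⟨?_, ?_, ?_, ?_, ?_⟩
  · intro j; dsimp only; split_ifs
    · linarith
    · positivity
    · exact le_refl 0
  · intro j; dsimp only; split_ifs
    · linarith
    · positivity
    · exact le_refl 0
  · simp only []
    rw [sum_aux _ _ r n hr hrn]
    field_simp
    ring
  · simp only []
    rw [sum_aux _ _ r n hr hrn]
    field_simp
    ring
  · have hsummand : (fun (j : Fin n) =>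
        (Real.sqrt ((if (j : ℕ) = 0 then p + ε else if (j : ℕ) < r then (1 - p - ε) / ((r : ℝ) - 1) else 0)) -
         Real.sqrt ((if (j : ℕ) = 0 then p - ε else if (j : ℕ) < r then (1 - p + ε) / ((r : ℝ) - 1) else 0))) ^ 2)
        = fun (j : Fin n) => if (j : ℕ) = 0 then (Real.sqrt (p + ε) - Real.sqrt (p - ε)) ^ 2
            else if (j : ℕ) < r then
              (Real.sqrt ((1 - p - ε) / ((r : ℝ) - 1)) - Real.sqrt ((1 - p + ε) / ((r : ℝ) - 1))) ^ 2
            else 0 := by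
      funext j; split_ifs <;> simp
    dsimp only
    rw [hsummand, sum_aux _ _ r n hr hrn]
    have e1 : (Real.sqrt (p + ε) - Real.sqrt (p - ε)) ^ 2
        = (p + ε) + (p - ε) - 2 * Real.sqrt (p ^ 2 - ε ^ 2) := by
      have hm : Real.sqrt (p + ε) * Real.sqrt (p - ε) = Real.sqrt (p ^ 2 - ε ^ 2) := by
        rw [← Real.sqrt_mul h1]; congr 1; ring
      rw [sub_sq, Real.sq_sqrt h1, Real.sq_sqrt h2, mul_assoc, hm]; ring
    have e2 : ((r : ℝ) - 1) *
        (Real.sqrt ((1 - p - ε) / ((r : ℝ) - 1)) - Real.sqrt ((1 - p + ε) / ((r : ℝ) - 1))) ^ 2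
        = (1 - p - ε) + (1 - p + ε) - 2 * Real.sqrt ((1 - p) ^ 2 - ε ^ 2) := by
      have hsc : Real.sqrt ((r : ℝ) - 1) ^ 2 = (r : ℝ) - 1 := Real.sq_sqrt hc.le
      rw [Real.sqrt_div h3, Real.sqrt_div h4, div_sub_div_same, div_pow, hsc,
        mul_div_cancel₀ _ (ne_of_gt hc)]
      have hm2 : Real.sqrt (1 - p - ε) * Real.sqrt (1 - p + ε)
          = Real.sqrt ((1 - p) ^ 2 - ε ^ 2) := by
        rw [← Real.sqrt_mul h3]; congr 1; ring
      rw [sub_sq, Real.sq_sqrt h3, Real.sq_sqrt h4, mul_assoc, hm2]; ring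
    rw [e1, e2]
    congr 1
    ring
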